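/- arXiv:0905.2558 — 2 statements merged into one kernel-verified Lean document; each statement's English description precedes it below -/
import Mathlib

section
/- Let M be a bounded linear operator on a complex Hilbert space H. Assume: (i) there is a dense subset C of H such that for every pair of vectors φ, ψ ∈ C one has sup_{n ∈ ℕ} |⟨φ, Mⁿ ψ⟩| < ∞; (ii) there are a real number α > 0, complex numbers α₁, …, α_N each of modulus |α_j| = α, nonzero bounded idempotent operators P₁, …, P_N with P_j P_k = 0 for j ≠ k, and bounded nilpotent operators D₁, …, D_N with P_j D_j = D_j P_j = D_j, such that, setting Q = 1 − Σ_{j=1}^N P_j, one has M = Σ_{j=1}^N (α_j P_j + D_j) + Q M Q; (iii) there exists β < log α such that ‖(QMQ)ⁿ‖ ≤ e^{βn} for all n ≥ 1. If in addition D_{j₀} ≠ 0 for some index j₀, then α < 1. (Equivalently: if α = 1, all the eigennilpotents D_j vanish, i.e. the peripheral eigenvalues are semisimple.) -/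
open Finset in
private lemma aux_pow_mul_eq_zero {A : Type*} [Ring A] {x y : A} (h : x * y = 0) :
    ∀ n : ℕ, 1 ≤ n → x ^ n * y = 0 := by
  intro n hn
  obtain ⟨k, rfl⟩ : ∃ k, n = k + 1 := ⟨n - 1, by omega⟩
  rw [pow_succ, mul_assoc, h, mul_zero]

private lemma aux_idem_pow {A : Type*} [Ring A] {p : A} (hpp : p * p = p) :
    ∀ n : ℕ, 1 ≤ n → p ^ n = p := by
  intro n hn
  induction n with
  | zero => omega
  | succ k ih =>
    rcases Nat.eq_or_lt_of_le hn with h1 | h1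
    · simp [← h1]
    · rw [pow_succ, ih (by omega), hpp]

private lemma aux_dpow_mul_p {A : Type*} [Ring A] {p d : A} (hdp : d * p = d) :
    ∀ n : ℕ, 1 ≤ n → d ^ n * p = d ^ n := by
  intro n hn
  obtain ⟨k, rfl⟩ : ∃ k, n = k + 1 := ⟨n - 1, by omega⟩
  rw [pow_succ, mul_assoc, hdp]

open Finset in
private lemma aux_binom {A : Type*} [Ring A] [Algebra ℂ A] {p d : A} (c : ℂ)
    (hpp : p * p = p) (hpd : p * d = d) (hdp : d * p = d) (n : ℕ) (hn : 1 ≤ n) :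
    (c • p + d) ^ n
      = ∑ k ∈ Finset.range (n + 1), ((n.choose k : ℂ) * c ^ (n - k)) • (d ^ k * p) := by
  have hc : Commute d (c • p) := by
    show d * (c • p) = (c • p) * d
    rw [mul_smul_comm, smul_mul_assoc, hpd, hdp]
  rw [add_comm (c • p) d, hc.add_pow]
  refine Finset.sum_congr rfl fun k hk => ?_
  have hkn : k ≤ n := by simpa [Nat.lt_succ_iff] using hk
  have hdkp : d ^ k * p ^ (n - k) = d ^ k * p := by
    rcases Nat.eq_zero_or_pos (n - k) with h0 | h0
    · rw [h0, pow_zero, mul_one]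
      exact (aux_dpow_mul_p hdp k (by omega)).symm
    · rw [aux_idem_pow hpp _ h0]
  calc d ^ k * (c • p) ^ (n - k) * ↑(n.choose k)
      = (↑(n.choose k) : A) * (c ^ (n - k) • (d ^ k * p ^ (n - k))) := by
        rw [smul_pow, mul_smul_comm]
        exact ((Nat.cast_commute (n.choose k) _).eq).symm
    _ = (n.choose k) • (c ^ (n - k) • (d ^ k * p ^ (n - k))) := by rw [← nsmul_eq_mul]
    _ = ((n.choose k : ℂ)) • (c ^ (n - k) • (d ^ k * p)) := by
        rw [hdkp, Nat.cast_smul_eq_nsmul ℂ]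
    _ = ((n.choose k : ℂ) * c ^ (n - k)) • (d ^ k * p) := by rw [smul_smul]

private lemma aux_norm_pow {H : Type*} [NormedAddCommGroup H] [InnerProductSpace ℂ H]
    (T : H →L[ℂ] H) : ∀ k : ℕ, ‖T ^ k‖ ≤ (max 1 ‖T‖) ^ k := by
  intro k
  induction k with
  | zero =>
    rw [pow_zero, pow_zero]
    rw [show (1 : H →L[ℂ] H) = ContinuousLinearMap.id ℂ H from rfl]
    exact ContinuousLinearMap.norm_id_le
  | succ k ih =>
    calc ‖T ^ (k + 1)‖ = ‖T ^ k * T‖ := by rw [pow_succ]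
      _ ≤ ‖T ^ k‖ * ‖T‖ := norm_mul_le _ _
      _ ≤ (max 1 ‖T‖) ^ k * (max 1 ‖T‖) :=
          mul_le_mul ih (le_max_right _ _) (norm_nonneg _) (by positivity)
      _ = (max 1 ‖T‖) ^ (k + 1) := (pow_succ _ _).symm

set_option maxHeartbeats 1000000

/-- Semisimplicity part of Proposition A.3.
If the matrix elements of the powers of `M` are uniformly bounded on a dense set,
and `M` admits a peripheral spectral decomposition
`M = ∑ j (αⱼ Pⱼ + Dⱼ) + Q M Q` where the `αⱼ` all have modulus `α > 0`,
the `Pⱼ` are nonzero mutually orthogonal idempotents, the `Dⱼ` are nilpotents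
attached to the blocks, and the remainder `Q M Q` has norm decay
`‖(QMQ)ⁿ‖ ≤ e^{βn}` with `β < log α`, and if moreover some eigennilpotent
`D_{j₀}` is nonzero, then `α < 1` (i.e. peripheral eigenvalues of modulus `1`
are semisimple). -/
theorem spectral_radius_lt_one_of_nonzero_nilpotent
    {H : Type*} [NormedAddCommGroup H] [InnerProductSpace ℂ H] [CompleteSpace H]
    (M : H →L[ℂ] H)
    (C : Set H) (hC : Dense C)
    (hbdd : ∀ φ ∈ C, ∀ ψ ∈ C,
      ∃ B : ℝ, ∀ n : ℕ, ‖(inner ℂ φ ((M ^ n) ψ) : ℂ)‖ ≤ B)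
    (α : ℝ) (hα : 0 < α) (N : ℕ)
    (a : Fin N → ℂ) (ha : ∀ j, ‖a j‖ = α)
    (P : Fin N → (H →L[ℂ] H))
    (hPne : ∀ j, P j ≠ 0)
    (hPidem : ∀ j, P j * P j = P j)
    (hPorth : ∀ j k, j ≠ k → P j * P k = 0)
    (D : Fin N → (H →L[ℂ] H))
    (hDnil : ∀ j, ∃ m : ℕ, 1 ≤ m ∧ (D j) ^ m = 0)
    (hPD : ∀ j, P j * D j = D j) (hDP : ∀ j, D j * P j = D j)
    (Q : H →L[ℂ] H) (hQ : Q = 1 - ∑ j, P j)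
    (hM : M = (∑ j, (a j • P j + D j)) + Q * M * Q)
    (hβ : ∃ β : ℝ, β < Real.log α ∧
      ∀ n : ℕ, 1 ≤ n → ‖(Q * M * Q) ^ n‖ ≤ Real.exp (β * n))
    (hD0 : ∃ j₀, D j₀ ≠ 0) :
    α < 1 := by
  classical
  by_contra hcon
  push_neg at hcon
  have hα1 : (1 : ℝ) ≤ α := hcon
  obtain ⟨β, hβlt, hβbd⟩ := hβ
  obtain ⟨j₁, hj₁⟩ := hD0
  -- the identity operator is nonzero
  have hone : (1 : H →L[ℂ] H) ≠ 0 := by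
    intro h
    apply hj₁
    ext x
    have hx : x = 0 := by
      have := congrArg (fun T : H →L[ℂ] H => T x) h
      simpa using this
    simp [hx]
  -- minimal nilpotency indices
  have hex : ∀ j, ∃ k, D j ^ k = 0 := fun j => ⟨(hDnil j).choose, (hDnil j).choose_spec.2⟩
  set μ : Fin N → ℕ := fun j => Nat.find (hex j) with hμdef
  have hμ_spec : ∀ j, D j ^ (μ j) = 0 := fun j => Nat.find_spec (hex j)
  have hμ_min : ∀ j k, k < μ j → D j ^ k ≠ 0 := fun j k hk => Nat.find_min (hex j) hk
  obtain ⟨j₀, -, hj₀⟩ :=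
    Finset.exists_mem_eq_sup (Finset.univ : Finset (Fin N)) ⟨j₁, Finset.mem_univ j₁⟩ μ
  set m : ℕ := μ j₀ with hmdef
  have hμ_le : ∀ j, μ j ≤ m := fun j => by
    rw [← hj₀]; exact Finset.le_sup (Finset.mem_univ j)
  have hm2 : 2 ≤ m := by
    have h0 : μ j₁ ≠ 0 := fun h => hone (by simpa [h] using hμ_spec j₁)
    have h1 : μ j₁ ≠ 1 := fun h => hj₁ (by simpa [h] using hμ_spec j₁)
    have := hμ_le j₁
    omega
  have hDm : D j₀ ^ m = 0 := hμ_spec j₀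
  have hDm1 : D j₀ ^ (m - 1) ≠ 0 := hμ_min j₀ (m - 1) (by omega)
  have hDjk : ∀ j k, m ≤ k → D j ^ k = 0 := by
    intro j k hk
    have h1 : μ j ≤ k := le_trans (hμ_le j) hk
    rw [show k = μ j + (k - μ j) by omega, pow_add, hμ_spec j, zero_mul]
  -- basic algebra of the decomposition
  set R : H →L[ℂ] H := Q * M * Q with hR
  set B : Fin N → (H →L[ℂ] H) := fun j => a j • P j + D j with hB
  have hM' : M = (∑ j, B j) + R := by simp only [hB, hR]; exact hM
  have hPQ : ∀ j, P j * Q = 0 := by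
    intro j
    rw [hQ, mul_sub, mul_one, Finset.mul_sum,
      Finset.sum_eq_single j (fun k _ hk => hPorth j k (Ne.symm hk))
        (fun h => absurd (Finset.mem_univ j) h), hPidem j, sub_self]
  have hQP : ∀ j, Q * P j = 0 := by
    intro j
    rw [hQ, sub_mul, one_mul, Finset.sum_mul,
      Finset.sum_eq_single j (fun k _ hk => hPorth k j hk)
        (fun h => absurd (Finset.mem_univ j) h), hPidem j, sub_self]
  have hDQ : ∀ j, D j * Q = 0 := fun j => by
    rw [← hDP j, mul_assoc, hPQ, mul_zero]
  have hQD : ∀ j, Q * D j = 0 := fun j => by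
    rw [← hPD j, ← mul_assoc, hQP, zero_mul]
  have hBP0 : ∀ k j, k ≠ j → B k * P j = 0 := by
    intro k j hkj
    simp only [hB]
    rw [add_mul, smul_mul_assoc, hPorth k j hkj, smul_zero, zero_add, ← hDP k,
      mul_assoc, hPorth k j hkj, mul_zero]
  have hBP_self : ∀ j, B j * P j = B j := by
    intro j
    simp only [hB]
    rw [add_mul, smul_mul_assoc, hPidem j, hDP j]
  have hBQ : ∀ j, B j * Q = 0 := by
    intro j
    simp only [hB]
    rw [add_mul, smul_mul_assoc, hPQ, smul_zero, zero_add, hDQ]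
  have hQB : ∀ j, Q * B j = 0 := by
    intro j
    simp only [hB]
    rw [mul_add, mul_smul_comm, hQP, smul_zero, zero_add, hQD]
  have hBR : ∀ j, B j * R = 0 := by
    intro j
    rw [hR, show Q * M * Q = Q * (M * Q) by rw [mul_assoc], ← mul_assoc, hBQ, zero_mul]
  have hRB : ∀ j, R * B j = 0 := by
    intro j
    rw [hR, mul_assoc, hQB, mul_zero]
  have hRP : ∀ j, R * P j = 0 := by
    intro j
    rw [hR, mul_assoc, hQP, mul_zero]
  have hBB : ∀ j k, j ≠ k → B j * B k = 0 := by
    intro j k hjk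
    have h1 : B j * P k = 0 := hBP0 j k hjk
    have h2 : B j * D k = 0 := by
      rw [← hPD k, ← mul_assoc, h1, zero_mul]
    simp only [hB] at h1 h2 ⊢
    rw [mul_add, mul_smul_comm, h1, h2, smul_zero, zero_add]
  -- power decomposition
  have hMn : ∀ n : ℕ, 1 ≤ n → M ^ n = (∑ j, B j ^ n) + R ^ n := by
    intro n hn
    induction n with
    | zero => omega
    | succ n ih =>
      rcases Nat.eq_or_lt_of_le hn with h1 | h1
      · simp only [← h1, pow_one]; exact hM'
      · have hn1 : 1 ≤ n := by omega
        rw [pow_succ, ih hn1, hM', add_mul, mul_add, mul_add, Finset.sum_mul]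
        have hT2 : (∑ j, B j ^ n) * R = 0 := by
          rw [Finset.sum_mul]
          exact Finset.sum_eq_zero fun j _ => aux_pow_mul_eq_zero (hBR j) n hn1
        have hT3 : R ^ n * (∑ j, B j) = 0 := by
          rw [Finset.mul_sum]
          exact Finset.sum_eq_zero fun j _ => aux_pow_mul_eq_zero (hRB j) n hn1
        have hT1 : ∀ j, B j ^ n * (∑ k, B k) = B j ^ (n + 1) := by
          intro j
          rw [Finset.mul_sum,
            Finset.sum_eq_single j
              (fun k _ hk => aux_pow_mul_eq_zero (hBB j k (Ne.symm hk)) n hn1)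
              (fun h => absurd (Finset.mem_univ j) h), ← pow_succ]
        rw [hT2, hT3]
        simp only [hT1, ← pow_succ]
        abel
  -- choice of vectors
  obtain ⟨ψ0, hψ0⟩ : ∃ x : H, (D j₀ ^ (m - 1)) x ≠ 0 := by
    by_contra h
    push_neg at h
    exact hDm1 (ContinuousLinearMap.ext fun x => by simpa using h x)
  set Ψ : H := (P j₀) ψ0 with hΨ
  set w : H := (D j₀ ^ (m - 1)) ψ0 with hw
  have hwne : w ≠ 0 := hψ0
  set v : ℕ → H := fun k => ((D j₀ ^ k) * P j₀) ψ0 with hv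
  have hvm1 : v (m - 1) = w := by
    show ((D j₀ ^ (m - 1)) * P j₀) ψ0 = w
    rw [aux_dpow_mul_p (hDP j₀) (m - 1) (by omega), hw]
  have hv0 : ∀ k, m ≤ k → v k = 0 := by
    intro k hk
    simp only [hv, hDjk j₀ k hk, zero_mul, ContinuousLinearMap.zero_apply]
  -- operator formula for Mⁿ P_{j₀}
  have hMop : ∀ n : ℕ, 1 ≤ n → M ^ n * P j₀
      = ∑ k ∈ Finset.range (n + 1), ((n.choose k : ℂ) * a j₀ ^ (n - k)) • (D j₀ ^ k * P j₀) := by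
    intro n hn
    have h1 : M ^ n * P j₀ = B j₀ ^ n * P j₀ := by
      rw [hMn n hn, add_mul, Finset.sum_mul,
        Finset.sum_eq_single j₀
          (fun k _ hk => aux_pow_mul_eq_zero (hBP0 k j₀ hk) n hn)
          (fun h => absurd (Finset.mem_univ j₀) h),
        aux_pow_mul_eq_zero (hRP j₀) n hn, add_zero]
    have h2 : B j₀ ^ n * P j₀ = B j₀ ^ n := by
      obtain ⟨k, rfl⟩ : ∃ k, n = k + 1 := ⟨n - 1, by omega⟩
      rw [pow_succ, mul_assoc, hBP_self]
    rw [h1, h2, hB]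
    exact aux_binom (a j₀) (hPidem j₀) (hPD j₀) (hDP j₀) n hn
  -- the matrix-element expansion
  have hg : ∀ n : ℕ, 1 ≤ n → (inner ℂ w ((M ^ n) Ψ) : ℂ)
      = ∑ k ∈ Finset.range (n + 1), ((n.choose k : ℂ) * a j₀ ^ (n - k)) * (inner ℂ w (v k) : ℂ) := by
    intro n hn
    have h1 : (M ^ n) Ψ = ∑ k ∈ Finset.range (n + 1),
        ((n.choose k : ℂ) * a j₀ ^ (n - k)) • v k := by
      have h2 : (M ^ n) Ψ = (M ^ n * P j₀) ψ0 := rfl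
      rw [h2, hMop n hn]
      simp only [ContinuousLinearMap.sum_apply, ContinuousLinearMap.smul_apply, hv]
    rw [h1, inner_sum]
    exact Finset.sum_congr rfl fun k _ => inner_smul_right _ _ _
  -- norm bounds
  have hanorm : ∀ j, ‖a j‖ = α := fun j => by exact ha j
  set Kb : Fin N → ℝ := fun j => (max 1 ‖D j‖) ^ m * (‖P j‖ + 1) with hKb
  have hKb_nonneg : ∀ j, 0 ≤ Kb j := by
    intro j
    have h1 : (0:ℝ) < max 1 ‖D j‖ := lt_of_lt_of_le one_pos (le_max_left _ _)
    have h2 : (0:ℝ) ≤ ‖P j‖ + 1 := by positivity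
    positivity
  have hterm : ∀ j, ∀ n k : ℕ, 1 ≤ n → k < m →
      ‖((n.choose k : ℂ) * a j ^ (n - k)) • (D j ^ k * P j)‖
        ≤ (n : ℝ) ^ (m - 1) * α ^ n * Kb j := by
    intro j n k hn hkm
    have h1 : ((n.choose k : ℝ)) ≤ (n : ℝ) ^ (m - 1) := by
      have := Nat.choose_le_pow n k
      have h2 : n ^ k ≤ n ^ (m - 1) := Nat.pow_le_pow_right hn (by omega)
      exact_mod_cast le_trans this h2
    have h2 : α ^ (n - k) ≤ α ^ n := pow_le_pow_right₀ hα1 (Nat.sub_le n k)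
    have h3 : ‖D j ^ k * P j‖ ≤ Kb j := by
      calc ‖D j ^ k * P j‖ ≤ ‖D j ^ k‖ * ‖P j‖ := norm_mul_le _ _
        _ ≤ (max 1 ‖D j‖) ^ k * (‖P j‖ + 1) := by
            refine mul_le_mul (aux_norm_pow (D j) k) (by linarith) (norm_nonneg _) (by positivity)
        _ ≤ (max 1 ‖D j‖) ^ m * (‖P j‖ + 1) := by
            refine mul_le_mul_of_nonneg_right ?_ (by positivity)
            exact pow_le_pow_right₀ (le_max_left _ _) (by omega)
    calc ‖((n.choose k : ℂ) * a j ^ (n - k)) • (D j ^ k * P j)‖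
        = ‖(n.choose k : ℂ) * a j ^ (n - k)‖ * ‖D j ^ k * P j‖ := norm_smul _ _
      _ = (n.choose k : ℝ) * α ^ (n - k) * ‖D j ^ k * P j‖ := by
          rw [norm_mul, norm_pow, hanorm j, Complex.norm_natCast]
      _ ≤ ((n : ℝ) ^ (m - 1) * α ^ n) * Kb j := by
          refine mul_le_mul ?_ h3 (norm_nonneg _) (by positivity)
          exact mul_le_mul h1 h2 (by positivity) (by positivity)
  have hBnorm : ∀ j, ∀ n : ℕ, 1 ≤ n →
      ‖B j ^ n‖ ≤ (m * Kb j) * ((n : ℝ) ^ (m - 1) * α ^ n) := by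
    intro j n hn
    have hexp : B j ^ n = ∑ k ∈ Finset.range (n + 1),
        ((n.choose k : ℂ) * a j ^ (n - k)) • (D j ^ k * P j) := by
      rw [hB]
      exact aux_binom (a j) (hPidem j) (hPD j) (hDP j) n hn
    calc ‖B j ^ n‖
        ≤ ∑ k ∈ Finset.range (n + 1),
            ‖((n.choose k : ℂ) * a j ^ (n - k)) • (D j ^ k * P j)‖ := by
          rw [hexp]; exact norm_sum_le _ _
      _ ≤ ∑ k ∈ Finset.range (n + 1),
            (if k < m then (n : ℝ) ^ (m - 1) * α ^ n * Kb j else 0) := by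
          refine Finset.sum_le_sum fun k _ => ?_
          by_cases hkm : k < m
          · simpa [hkm] using hterm j n k hn hkm
          · have hz : D j ^ k = 0 := hDjk j k (by omega)
            simp [hkm, hz]
      _ = ∑ k ∈ (Finset.range (n + 1)).filter (· < m),
            ((n : ℝ) ^ (m - 1) * α ^ n * Kb j) := (Finset.sum_filter _ _).symm
      _ ≤ (m : ℝ) * ((n : ℝ) ^ (m - 1) * α ^ n * Kb j) := by
          rw [Finset.sum_const, nsmul_eq_mul]
          refine mul_le_mul_of_nonneg_right ?_ ?_
          · have hcard : ((Finset.range (n + 1)).filter (· < m)).card ≤ m := by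
              calc ((Finset.range (n + 1)).filter (· < m)).card
                  ≤ (Finset.range m).card := by
                    refine Finset.card_le_card ?_
                    intro x hx
                    simp only [Finset.mem_filter, Finset.mem_range] at hx ⊢
                    exact hx.2
                _ = m := Finset.card_range m
            exact_mod_cast hcard
          · have := hKb_nonneg j
            positivity
      _ = (m * Kb j) * ((n : ℝ) ^ (m - 1) * α ^ n) := by ring
  set K : ℝ := (∑ j, (m : ℝ) * Kb j) + 1 with hK
  have hKsum_nonneg : 0 ≤ ∑ j, (m : ℝ) * Kb j :=
    Finset.sum_nonneg fun j _ => mul_nonneg (by positivity) (hKb_nonneg j)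
  have hK1 : 1 ≤ K := by rw [hK]; linarith
  have hKpos : 0 < K := lt_of_lt_of_le one_pos hK1
  have hMnorm : ∀ n : ℕ, 1 ≤ n → ‖M ^ n‖ ≤ K * ((n : ℝ) ^ (m - 1) * α ^ n) := by
    intro n hn
    have hn1 : (1 : ℝ) ≤ (n : ℝ) := by exact_mod_cast hn
    have hnm1 : (1 : ℝ) ≤ (n : ℝ) ^ (m - 1) := by
      calc (1:ℝ) = 1 ^ (m - 1) := (one_pow _).symm
        _ ≤ (n : ℝ) ^ (m - 1) := pow_le_pow_left₀ zero_le_one hn1 _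
    have hexp : Real.exp (β * n) ≤ (n : ℝ) ^ (m - 1) * α ^ n := by
      have h1 : Real.exp (β * n) ≤ α ^ n := by
        rw [mul_comm, Real.exp_nat_mul]
        refine pow_le_pow_left₀ (Real.exp_nonneg β) ?_ n
        rw [← Real.exp_log hα]
        exact Real.exp_le_exp.mpr hβlt.le
      calc Real.exp (β * n) ≤ α ^ n := h1
        _ ≤ (n : ℝ) ^ (m - 1) * α ^ n := le_mul_of_one_le_left (by positivity) hnm1
    calc ‖M ^ n‖ = ‖(∑ j, B j ^ n) + R ^ n‖ := by rw [hMn n hn]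
      _ ≤ ‖∑ j, B j ^ n‖ + ‖R ^ n‖ := norm_add_le _ _
      _ ≤ (∑ j, ‖B j ^ n‖) + ‖R ^ n‖ := add_le_add_left (norm_sum_le _ _) _
      _ ≤ (∑ j, (m * Kb j) * ((n : ℝ) ^ (m - 1) * α ^ n)) + Real.exp (β * n) :=
          add_le_add (Finset.sum_le_sum fun j _ => hBnorm j n hn) (hβbd n hn)
      _ ≤ (∑ j, (m * Kb j) * ((n : ℝ) ^ (m - 1) * α ^ n))
            + 1 * ((n : ℝ) ^ (m - 1) * α ^ n) := by
          rw [one_mul]; exact add_le_add_right hexp _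
      _ = K * ((n : ℝ) ^ (m - 1) * α ^ n) := by
          rw [hK, add_mul, Finset.sum_mul]
  -- constants for the lower bound
  have hwpos : (0:ℝ) < ‖w‖ := norm_pos_iff.mpr hwne
  set cstar : ℝ := ‖w‖ ^ 2 with hcstar
  have hcpos : (0:ℝ) < cstar := by rw [hcstar]; exact pow_pos hwpos 2
  set S : ℝ := ‖w‖ * ((max 1 ‖D j₀‖) ^ m * ‖Ψ‖) + 1 with hSdef
  have hSpos : (0:ℝ) < S := by
    have h1 : (0:ℝ) < max 1 ‖D j₀‖ := lt_of_lt_of_le one_pos (le_max_left _ _)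
    have h2 : (0:ℝ) ≤ ‖Ψ‖ := norm_nonneg _
    have h3 : (0:ℝ) ≤ ‖w‖ := norm_nonneg _
    rw [hSdef]; positivity
  have hcm1 : ‖(inner ℂ w (v (m - 1)) : ℂ)‖ = cstar := by
    rw [hvm1, hcstar]
    simp [inner_self_eq_norm_sq_to_K]
  have hcS : ∀ k, k ≤ m → ‖(inner ℂ w (v k) : ℂ)‖ ≤ S := by
    intro k hk
    have h1 : ‖(inner ℂ w (v k) : ℂ)‖ ≤ ‖w‖ * ‖v k‖ := norm_inner_le_norm _ _
    have h2 : ‖v k‖ ≤ (max 1 ‖D j₀‖) ^ m * ‖Ψ‖ := by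
      have h3 : v k = (D j₀ ^ k) Ψ := rfl
      calc ‖v k‖ = ‖(D j₀ ^ k) Ψ‖ := by rw [h3]
        _ ≤ ‖D j₀ ^ k‖ * ‖Ψ‖ := ContinuousLinearMap.le_opNorm _ _
        _ ≤ (max 1 ‖D j₀‖) ^ k * ‖Ψ‖ :=
            mul_le_mul_of_nonneg_right (aux_norm_pow _ _) (norm_nonneg _)
        _ ≤ (max 1 ‖D j₀‖) ^ m * ‖Ψ‖ := by
            refine mul_le_mul_of_nonneg_right ?_ (norm_nonneg _)
            exact pow_le_pow_right₀ (le_max_left _ _) hk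
    calc ‖(inner ℂ w (v k) : ℂ)‖ ≤ ‖w‖ * ((max 1 ‖D j₀‖) ^ m * ‖Ψ‖) :=
          le_trans h1 (mul_le_mul_of_nonneg_left h2 (norm_nonneg _))
      _ ≤ S := by rw [hSdef]; linarith
  set δ : ℝ := cstar / (((m - 1).factorial : ℝ) * 2 ^ (m - 1) * α ^ (m - 1)) with hδdef
  have hδpos : 0 < δ := by
    have h1 : (0:ℝ) < ((m - 1).factorial : ℝ) := by exact_mod_cast (m - 1).factorial_pos
    rw [hδdef]; positivity
  -- lower bound for the binomial coefficient
  have hchoose : ∀ n : ℕ, 2 * m ≤ n →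
      ((n : ℝ)) ^ (m - 1) / (2 ^ (m - 1) * ((m - 1).factorial : ℝ)) ≤ (n.choose (m - 1) : ℝ) := by
    intro n hn
    have h0 : ((n + 1 - (m - 1) : ℕ) ^ (m - 1) : ℝ) / ((m - 1).factorial : ℝ)
        ≤ (n.choose (m - 1) : ℝ) := by
      have := Nat.pow_le_choose (m - 1) n (α := ℝ)
      exact_mod_cast this
    have h1 : (n : ℝ) / 2 ≤ ((n + 1 - (m - 1) : ℕ) : ℝ) := by
      have hle : m - 1 ≤ n + 1 := by omega
      rw [Nat.cast_sub hle]
      have hm1 : ((m - 1 : ℕ) : ℝ) = (m : ℝ) - 1 := by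
        rw [Nat.cast_sub (by omega : 1 ≤ m)]; simp
      have hn' : (2 * m : ℝ) ≤ (n : ℝ) := by exact_mod_cast hn
      push_cast
      rw [hm1]
      linarith
    have h2 : ((n : ℝ) / 2) ^ (m - 1) ≤ ((n + 1 - (m - 1) : ℕ) : ℝ) ^ (m - 1) :=
      pow_le_pow_left₀ (by positivity) h1 _
    have hfac : (0:ℝ) < ((m - 1).factorial : ℝ) := by exact_mod_cast (m - 1).factorial_pos
    calc ((n : ℝ)) ^ (m - 1) / (2 ^ (m - 1) * ((m - 1).factorial : ℝ))
        = ((n : ℝ) / 2) ^ (m - 1) / ((m - 1).factorial : ℝ) := by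
          rw [div_pow]; ring
      _ ≤ ((n + 1 - (m - 1) : ℕ) : ℝ) ^ (m - 1) / ((m - 1).factorial : ℝ) := by
          exact div_le_div_of_nonneg_right h2 hfac.le
      _ ≤ (n.choose (m - 1) : ℝ) := by exact_mod_cast h0
  -- lower bound for the main term
  have hmain : ∀ n : ℕ, 2 * m ≤ n →
      δ * ((n : ℝ) ^ (m - 1) * α ^ n)
        ≤ ‖((n.choose (m - 1) : ℂ) * a j₀ ^ (n - (m - 1)) * (inner ℂ w (v (m - 1)) : ℂ))‖ := by
    intro n hn
    have hαm1 : (0:ℝ) < α ^ (m - 1) := pow_pos hα _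
    have e1 : ‖((n.choose (m - 1) : ℂ) * a j₀ ^ (n - (m - 1)) * (inner ℂ w (v (m - 1)) : ℂ))‖
        = (n.choose (m - 1) : ℝ) * α ^ (n - (m - 1)) * cstar := by
      rw [norm_mul, norm_mul, norm_pow, hanorm j₀, Complex.norm_natCast, hcm1]
    have e3 : α ^ (n - (m - 1)) = α ^ n / α ^ (m - 1) := by
      rw [eq_div_iff (ne_of_gt hαm1)]
      exact pow_sub_mul_pow α (by omega)
    rw [e1, e3]
    have hfac : (0:ℝ) < ((m - 1).factorial : ℝ) := by exact_mod_cast (m - 1).factorial_pos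
    calc δ * ((n : ℝ) ^ (m - 1) * α ^ n)
        = ((n : ℝ) ^ (m - 1) / (2 ^ (m - 1) * ((m - 1).factorial : ℝ)))
            * (α ^ n / α ^ (m - 1) * cstar) := by
          rw [hδdef]; field_simp
      _ ≤ (n.choose (m - 1) : ℝ) * (α ^ n / α ^ (m - 1) * cstar) := by
          refine mul_le_mul_of_nonneg_right (hchoose n hn) ?_
          positivity
      _ = (n.choose (m - 1) : ℝ) * (α ^ n / α ^ (m - 1)) * cstar := by ring
  -- upper bound for the remaining terms
  have hrest : ∀ n : ℕ, 1 ≤ n →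
      ‖∑ k ∈ (Finset.range (n + 1)).erase (m - 1),
          (n.choose k : ℂ) * a j₀ ^ (n - k) * (inner ℂ w (v k) : ℂ)‖
        ≤ (m : ℝ) * ((n : ℝ) ^ (m - 2) * α ^ n * S) := by
    intro n hn
    have hbound : ∀ k ∈ (Finset.range (n + 1)).erase (m - 1),
        ‖(n.choose k : ℂ) * a j₀ ^ (n - k) * (inner ℂ w (v k) : ℂ)‖
          ≤ (if k < m - 1 then (n : ℝ) ^ (m - 2) * α ^ n * S else 0) := by
      intro k hk
      obtain ⟨hkne, hkmem⟩ := Finset.mem_erase.mp hk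
      by_cases hkm : k < m - 1
      · simp only [hkm, if_true]
        have h1 : ((n.choose k : ℝ)) ≤ (n : ℝ) ^ (m - 2) := by
          have h2 := Nat.choose_le_pow n k
          have h3 : n ^ k ≤ n ^ (m - 2) := Nat.pow_le_pow_right hn (by omega)
          exact_mod_cast le_trans h2 h3
        have h2 : α ^ (n - k) ≤ α ^ n := pow_le_pow_right₀ hα1 (Nat.sub_le n k)
        have h3 : ‖(inner ℂ w (v k) : ℂ)‖ ≤ S := hcS k (by omega)
        calc ‖(n.choose k : ℂ) * a j₀ ^ (n - k) * (inner ℂ w (v k) : ℂ)‖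
            = (n.choose k : ℝ) * α ^ (n - k) * ‖(inner ℂ w (v k) : ℂ)‖ := by
              rw [norm_mul, norm_mul, norm_pow, hanorm j₀, Complex.norm_natCast]
          _ ≤ (n : ℝ) ^ (m - 2) * α ^ n * S := by
              refine mul_le_mul ?_ h3 (norm_nonneg _) (by positivity)
              exact mul_le_mul h1 h2 (by positivity) (by positivity)
      · have hkm' : m ≤ k := by omega
        have hz : v k = 0 := hv0 k hkm'
        simp [hkm, hz]
    calc ‖∑ k ∈ (Finset.range (n + 1)).erase (m - 1),
          (n.choose k : ℂ) * a j₀ ^ (n - k) * (inner ℂ w (v k) : ℂ)‖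
        ≤ ∑ k ∈ (Finset.range (n + 1)).erase (m - 1),
            ‖(n.choose k : ℂ) * a j₀ ^ (n - k) * (inner ℂ w (v k) : ℂ)‖ := norm_sum_le _ _
      _ ≤ ∑ k ∈ (Finset.range (n + 1)).erase (m - 1),
            (if k < m - 1 then (n : ℝ) ^ (m - 2) * α ^ n * S else 0) :=
          Finset.sum_le_sum hbound
      _ ≤ ∑ k ∈ Finset.range (n + 1),
            (if k < m - 1 then (n : ℝ) ^ (m - 2) * α ^ n * S else 0) := by
          refine Finset.sum_le_sum_of_subset_of_nonneg (Finset.erase_subset _ _) ?_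
          intro k _ _
          by_cases hkm : k < m - 1 <;> simp [hkm] <;> positivity
      _ = ∑ k ∈ (Finset.range (n + 1)).filter (· < m - 1),
            ((n : ℝ) ^ (m - 2) * α ^ n * S) := (Finset.sum_filter _ _).symm
      _ ≤ (m : ℝ) * ((n : ℝ) ^ (m - 2) * α ^ n * S) := by
          rw [Finset.sum_const, nsmul_eq_mul]
          refine mul_le_mul_of_nonneg_right ?_ (by positivity)
          have hcard : ((Finset.range (n + 1)).filter (· < m - 1)).card ≤ m := by
            calc ((Finset.range (n + 1)).filter (· < m - 1)).card
                ≤ (Finset.range m).card := by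
                  refine Finset.card_le_card ?_
                  intro x hx
                  simp only [Finset.mem_filter, Finset.mem_range] at hx ⊢
                  omega
              _ = m := Finset.card_range m
          exact_mod_cast hcard
  -- eventual lower bound for the matrix element
  have hglow : ∀ n : ℕ, 2 * m ≤ n → 2 * (m : ℝ) * S / δ ≤ (n : ℝ) →
      (δ / 2) * ((n : ℝ) ^ (m - 1) * α ^ n) ≤ ‖(inner ℂ w ((M ^ n) Ψ) : ℂ)‖ := by
    intro n hn2m hnS
    have hn1 : 1 ≤ n := by omega
    have hmem : m - 1 ∈ Finset.range (n + 1) := Finset.mem_range.mpr (by omega)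
    have hsplit : (inner ℂ w ((M ^ n) Ψ) : ℂ)
        = (∑ k ∈ (Finset.range (n + 1)).erase (m - 1),
            (n.choose k : ℂ) * a j₀ ^ (n - k) * (inner ℂ w (v k) : ℂ))
          + (n.choose (m - 1) : ℂ) * a j₀ ^ (n - (m - 1)) * (inner ℂ w (v (m - 1)) : ℂ) := by
      rw [hg n hn1, ← Finset.sum_erase_add _ _ hmem]
    have h1 : ‖((n.choose (m - 1) : ℂ) * a j₀ ^ (n - (m - 1)) * (inner ℂ w (v (m - 1)) : ℂ))‖
        ≤ ‖(inner ℂ w ((M ^ n) Ψ) : ℂ)‖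
          + ‖∑ k ∈ (Finset.range (n + 1)).erase (m - 1),
              (n.choose k : ℂ) * a j₀ ^ (n - k) * (inner ℂ w (v k) : ℂ)‖ := by
      have heq : (n.choose (m - 1) : ℂ) * a j₀ ^ (n - (m - 1)) * (inner ℂ w (v (m - 1)) : ℂ)
          = (inner ℂ w ((M ^ n) Ψ) : ℂ)
            - ∑ k ∈ (Finset.range (n + 1)).erase (m - 1),
                (n.choose k : ℂ) * a j₀ ^ (n - k) * (inner ℂ w (v k) : ℂ) := by
        rw [hsplit]; ring
      rw [heq]
      exact norm_sub_le _ _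
    have h2 := hmain n hn2m
    have h3 := hrest n hn1
    have hpow : ((n : ℝ)) ^ (m - 1) = (n : ℝ) ^ (m - 2) * (n : ℝ) := by
      rw [show m - 1 = (m - 2) + 1 by omega, pow_succ]
    have hδ2 : (0:ℝ) < δ / 2 := by positivity
    have hmS : (m : ℝ) * S ≤ δ / 2 * (n : ℝ) := by
      have h4 := mul_le_mul_of_nonneg_left hnS hδ2.le
      calc (m : ℝ) * S = δ / 2 * (2 * (m : ℝ) * S / δ) := by field_simp
        _ ≤ δ / 2 * (n : ℝ) := h4
    have hαn : (0:ℝ) < α ^ n := pow_pos hα n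
    have hnm2 : (0:ℝ) ≤ (n : ℝ) ^ (m - 2) := by positivity
    have hfinal : (δ / 2) * ((n : ℝ) ^ (m - 1) * α ^ n)
        + (m : ℝ) * ((n : ℝ) ^ (m - 2) * α ^ n * S) ≤ δ * ((n : ℝ) ^ (m - 1) * α ^ n) := by
      rw [hpow]
      nlinarith [mul_le_mul_of_nonneg_right hmS (mul_nonneg hnm2 hαn.le)]
    have h4 : δ * ((n : ℝ) ^ (m - 1) * α ^ n)
        ≤ ‖(inner ℂ w ((M ^ n) Ψ) : ℂ)‖ + (m : ℝ) * ((n : ℝ) ^ (m - 2) * α ^ n * S) :=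
      le_trans h2 (le_trans h1 (add_le_add_right h3 _))
    exact le_of_add_le_add_right (le_trans hfinal h4)
  -- approximation by the dense set and final contradiction
  have hden : (0:ℝ) < 2 * K * (‖Ψ‖ + ‖w‖ + 1) := by
    refine mul_pos (mul_pos two_pos hKpos) ?_
    positivity
  set ε : ℝ := min 1 (δ / 2 / (2 * K * (‖Ψ‖ + ‖w‖ + 1))) with hεdef
  have hεpos : 0 < ε := lt_min one_pos (div_pos (by positivity) hden)
  have hε1 : ε ≤ 1 := min_le_left _ _
  have hε2 : ε * (‖Ψ‖ + ‖w‖ + 1) ≤ δ / 2 / (2 * K) := by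
    have h1 : ε ≤ δ / 2 / (2 * K * (‖Ψ‖ + ‖w‖ + 1)) := min_le_right _ _
    have h2 : (0:ℝ) < ‖Ψ‖ + ‖w‖ + 1 := by positivity
    calc ε * (‖Ψ‖ + ‖w‖ + 1)
        ≤ (δ / 2 / (2 * K * (‖Ψ‖ + ‖w‖ + 1))) * (‖Ψ‖ + ‖w‖ + 1) :=
          mul_le_mul_of_nonneg_right h1 h2.le
      _ = δ / 2 / (2 * K) := by
          field_simp
  obtain ⟨φ', hφ'C, hφ'd⟩ := hC.exists_dist_lt w hεpos
  obtain ⟨ψ', hψ'C, hψ'd⟩ := hC.exists_dist_lt Ψ hεpos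
  obtain ⟨B₀, hB₀⟩ := hbdd φ' hφ'C ψ' hψ'C
  have hB₀' : ∀ n : ℕ, ‖(inner ℂ φ' ((M ^ n) ψ') : ℂ)‖ ≤ B₀ := by
    intro n
    exact hB₀ n
  have hφdist : ‖φ' - w‖ < ε := by rw [← dist_eq_norm, dist_comm]; exact hφ'd
  have hψdist : ‖ψ' - Ψ‖ < ε := by rw [← dist_eq_norm, dist_comm]; exact hψ'd
  have hψ'norm : ‖ψ'‖ ≤ ‖Ψ‖ + 1 := by
    calc ‖ψ'‖ = ‖Ψ + (ψ' - Ψ)‖ := by rw [add_sub_cancel]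
      _ ≤ ‖Ψ‖ + ‖ψ' - Ψ‖ := norm_add_le _ _
      _ ≤ ‖Ψ‖ + 1 := by linarith
  have hdiff : ∀ n : ℕ, 1 ≤ n →
      ‖(inner ℂ φ' ((M ^ n) ψ') : ℂ) - (inner ℂ w ((M ^ n) Ψ) : ℂ)‖
        ≤ K * ((n : ℝ) ^ (m - 1) * α ^ n) * (ε * (‖Ψ‖ + ‖w‖ + 1)) := by
    intro n hn
    have hMn' := hMnorm n hn
    have hX0 : (0:ℝ) ≤ K * ((n : ℝ) ^ (m - 1) * α ^ n) := by
      refine mul_nonneg hKpos.le ?_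
      positivity
    have hsplit2 : (inner ℂ φ' ((M ^ n) ψ') : ℂ) - (inner ℂ w ((M ^ n) Ψ) : ℂ)
        = (inner ℂ (φ' - w) ((M ^ n) ψ') : ℂ) + (inner ℂ w ((M ^ n) (ψ' - Ψ)) : ℂ) := by
      rw [inner_sub_left, map_sub, inner_sub_right]
      ring
    have e1 : ‖(inner ℂ (φ' - w) ((M ^ n) ψ') : ℂ)‖
        ≤ ε * (K * ((n : ℝ) ^ (m - 1) * α ^ n) * (‖Ψ‖ + 1)) := by
      have h2' : ‖(M ^ n) ψ'‖ ≤ K * ((n : ℝ) ^ (m - 1) * α ^ n) * (‖Ψ‖ + 1) := by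
        calc ‖(M ^ n) ψ'‖ ≤ ‖M ^ n‖ * ‖ψ'‖ := ContinuousLinearMap.le_opNorm _ _
          _ ≤ K * ((n : ℝ) ^ (m - 1) * α ^ n) * (‖Ψ‖ + 1) :=
            mul_le_mul hMn' hψ'norm (norm_nonneg _) hX0
      calc ‖(inner ℂ (φ' - w) ((M ^ n) ψ') : ℂ)‖
          ≤ ‖φ' - w‖ * ‖(M ^ n) ψ'‖ := norm_inner_le_norm _ _
        _ ≤ ε * (K * ((n : ℝ) ^ (m - 1) * α ^ n) * (‖Ψ‖ + 1)) := by
            refine mul_le_mul hφdist.le h2' (norm_nonneg _) hεpos.le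
    have e2 : ‖(inner ℂ w ((M ^ n) (ψ' - Ψ)) : ℂ)‖
        ≤ ‖w‖ * (K * ((n : ℝ) ^ (m - 1) * α ^ n) * ε) := by
      have h2' : ‖(M ^ n) (ψ' - Ψ)‖ ≤ K * ((n : ℝ) ^ (m - 1) * α ^ n) * ε := by
        calc ‖(M ^ n) (ψ' - Ψ)‖ ≤ ‖M ^ n‖ * ‖ψ' - Ψ‖ := ContinuousLinearMap.le_opNorm _ _
          _ ≤ K * ((n : ℝ) ^ (m - 1) * α ^ n) * ε :=
            mul_le_mul hMn' hψdist.le (norm_nonneg _) hX0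
      calc ‖(inner ℂ w ((M ^ n) (ψ' - Ψ)) : ℂ)‖
          ≤ ‖w‖ * ‖(M ^ n) (ψ' - Ψ)‖ := norm_inner_le_norm _ _
        _ ≤ ‖w‖ * (K * ((n : ℝ) ^ (m - 1) * α ^ n) * ε) :=
            mul_le_mul_of_nonneg_left h2' (norm_nonneg _)
    calc ‖(inner ℂ φ' ((M ^ n) ψ') : ℂ) - (inner ℂ w ((M ^ n) Ψ) : ℂ)‖
        = ‖(inner ℂ (φ' - w) ((M ^ n) ψ') : ℂ) + (inner ℂ w ((M ^ n) (ψ' - Ψ)) : ℂ)‖ := by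
          rw [hsplit2]
      _ ≤ ‖(inner ℂ (φ' - w) ((M ^ n) ψ') : ℂ)‖ + ‖(inner ℂ w ((M ^ n) (ψ' - Ψ)) : ℂ)‖ :=
          norm_add_le _ _
      _ ≤ ε * (K * ((n : ℝ) ^ (m - 1) * α ^ n) * (‖Ψ‖ + 1))
            + ‖w‖ * (K * ((n : ℝ) ^ (m - 1) * α ^ n) * ε) := add_le_add e1 e2
      _ = K * ((n : ℝ) ^ (m - 1) * α ^ n) * (ε * (‖Ψ‖ + ‖w‖ + 1)) := by ring
  -- choose a large n
  set n : ℕ := 2 * m + Nat.ceil (2 * (m : ℝ) * S / δ) + Nat.ceil (4 * (B₀ + 1) / δ) + 1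
    with hndef
  have hn2m : 2 * m ≤ n := by rw [hndef]; omega
  have hn1 : 1 ≤ n := by rw [hndef]; omega
  have hnS : 2 * (m : ℝ) * S / δ ≤ (n : ℝ) := by
    have h1 := Nat.le_ceil (2 * (m : ℝ) * S / δ)
    have h2 : (Nat.ceil (2 * (m : ℝ) * S / δ) : ℝ) ≤ (n : ℝ) := by
      have h3 : Nat.ceil (2 * (m : ℝ) * S / δ) ≤ n := by rw [hndef]; omega
      exact_mod_cast h3
    linarith
  have hnB : 4 * (B₀ + 1) / δ ≤ (n : ℝ) := by
    have h1 := Nat.le_ceil (4 * (B₀ + 1) / δ)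
    have h2 : (Nat.ceil (4 * (B₀ + 1) / δ) : ℝ) ≤ (n : ℝ) := by
      have h3 : Nat.ceil (4 * (B₀ + 1) / δ) ≤ n := by rw [hndef]; omega
      exact_mod_cast h3
    linarith
  have hglow' := hglow n hn2m hnS
  have hdiff' := hdiff n hn1
  have hXpos : (0:ℝ) ≤ (n : ℝ) ^ (m - 1) * α ^ n := by positivity
  have hKXd : K * ((n : ℝ) ^ (m - 1) * α ^ n) * (ε * (‖Ψ‖ + ‖w‖ + 1))
      ≤ (δ / 4) * ((n : ℝ) ^ (m - 1) * α ^ n) := by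
    calc K * ((n : ℝ) ^ (m - 1) * α ^ n) * (ε * (‖Ψ‖ + ‖w‖ + 1))
        ≤ K * ((n : ℝ) ^ (m - 1) * α ^ n) * (δ / 2 / (2 * K)) :=
          mul_le_mul_of_nonneg_left hε2 (mul_nonneg hKpos.le hXpos)
      _ = (δ / 4) * ((n : ℝ) ^ (m - 1) * α ^ n) := by
          field_simp
          ring
  have htri : ‖(inner ℂ w ((M ^ n) Ψ) : ℂ)‖
      ≤ ‖(inner ℂ φ' ((M ^ n) ψ') : ℂ)‖
        + ‖(inner ℂ φ' ((M ^ n) ψ') : ℂ) - (inner ℂ w ((M ^ n) Ψ) : ℂ)‖ := by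
    have h := norm_sub_norm_le ((inner ℂ w ((M ^ n) Ψ)) : ℂ) ((inner ℂ φ' ((M ^ n) ψ')) : ℂ)
    rw [norm_sub_rev] at h
    linarith
  have hfin : (δ / 4) * ((n : ℝ) ^ (m - 1) * α ^ n) ≤ B₀ := by
    have hb := hB₀' n
    have t1 : δ / 2 * ((n : ℝ) ^ (m - 1) * α ^ n)
        ≤ B₀ + δ / 4 * ((n : ℝ) ^ (m - 1) * α ^ n) :=
      le_trans hglow' (le_trans htri (add_le_add hb (le_trans hdiff' hKXd)))
    have t2 : δ / 4 * ((n : ℝ) ^ (m - 1) * α ^ n) + δ / 4 * ((n : ℝ) ^ (m - 1) * α ^ n)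
        ≤ B₀ + δ / 4 * ((n : ℝ) ^ (m - 1) * α ^ n) := by
      calc δ / 4 * ((n : ℝ) ^ (m - 1) * α ^ n) + δ / 4 * ((n : ℝ) ^ (m - 1) * α ^ n)
          = δ / 2 * ((n : ℝ) ^ (m - 1) * α ^ n) := by ring
        _ ≤ B₀ + δ / 4 * ((n : ℝ) ^ (m - 1) * α ^ n) := t1
    exact le_of_add_le_add_right t2
  have hfin2 : B₀ + 1 ≤ (δ / 4) * ((n : ℝ) ^ (m - 1) * α ^ n) := by
    calc B₀ + 1 = (δ / 4) * (4 * (B₀ + 1) / δ) := by field_simp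
      _ ≤ (δ / 4) * (n : ℝ) := mul_le_mul_of_nonneg_left hnB (by positivity)
      _ ≤ (δ / 4) * ((n : ℝ) ^ (m - 1) * α ^ n) := by
          refine mul_le_mul_of_nonneg_left ?_ (by positivity)
          have h1 : (1:ℝ) ≤ (n : ℝ) := by exact_mod_cast hn1
          have h2 : (1:ℝ) ≤ α ^ n := by
            calc (1:ℝ) = 1 ^ n := (one_pow n).symm
              _ ≤ α ^ n := pow_le_pow_left₀ zero_le_one hα1 n
          calc (n : ℝ) = (n : ℝ) ^ 1 := (pow_one _).symm
            _ ≤ (n : ℝ) ^ (m - 1) := pow_le_pow_right₀ h1 (by omega)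
            _ ≤ (n : ℝ) ^ (m - 1) * α ^ n := le_mul_of_one_le_right (by positivity) h2
  have hcontr := le_trans hfin2 hfin
  linarith
end

section
/- Let N be a bounded normal operator on a complex Hilbert space whose spectrum satisfies σ(N) ⊆ { z : |z| = 1 } ∪ { z : |z| ≤ r } for some 0 ≤ r < 1, and let S be a bounded operator with ‖S‖ < (1 − r)/4. Then the spectrum of N + S splits into two disjoint parts: σ(N + S) = σ⁽⁰⁾ ∪ σ⁽¹⁾ with σ⁽⁰⁾ ∩ σ⁽¹⁾ = ∅, where σ⁽⁰⁾ ⊆ { z : 1 − (1 − r)/4 < |z| < 1 + (1 − r)/4 } and σ⁽¹⁾ ⊆ { z : |z| < r + (1 − r)/4 }; moreover the two localization regions themselves are disjoint. -/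
/-- spectral splitting of Proposition 3.1.
If `N` is normal with spectrum contained in the unit circle together with the
disk of radius `r < 1`, and `‖S‖ < (1-r)/4`, then the spectrum of `N + S`
splits into two disjoint parts, one localized in a thin annulus around the
unit circle and the other in a disk of radius `r + (1-r)/4`; moreover the two
localization regions are themselves disjoint. -/
theorem spectral_splitting_of_perturbed_normal
    {H : Type*} [NormedAddCommGroup H] [InnerProductSpace ℂ H] [CompleteSpace H]
    (N S : H →L[ℂ] H)
    (hN : ContinuousLinearMap.adjoint N * N = N * ContinuousLinearMap.adjoint N)
    (r : ℝ) (hr0 : 0 ≤ r) (hr1 : r < 1)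
    (hspec : spectrum ℂ N ⊆ { z : ℂ | ‖z‖ = 1 } ∪ { z : ℂ | ‖z‖ ≤ r })
    (hS : ‖S‖ < (1 - r) / 4) :
    ∃ σ₀ σ₁ : Set ℂ,
      spectrum ℂ (N + S) = σ₀ ∪ σ₁ ∧
      σ₀ ∩ σ₁ = ∅ ∧
      σ₀ ⊆ { z : ℂ | 1 - (1 - r) / 4 < ‖z‖ ∧ ‖z‖ < 1 + (1 - r) / 4 } ∧
      σ₁ ⊆ { z : ℂ | ‖z‖ < r + (1 - r) / 4 } ∧
      { z : ℂ | 1 - (1 - r) / 4 < ‖z‖ ∧ ‖z‖ < 1 + (1 - r) / 4 } ∩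
        { z : ℂ | ‖z‖ < r + (1 - r) / 4 } = ∅ := by
  set ε : ℝ := (1 - r) / 4 with hεdef
  have hε0 : 0 < ε := by simp only [hεdef]; linarith
  set A : Set ℂ := { z : ℂ | 1 - ε < ‖z‖ ∧ ‖z‖ < 1 + ε } with hAdef
  set D : Set ℂ := { z : ℂ | ‖z‖ < r + ε } with hDdef
  have hAD : A ∩ D = ∅ := by
    ext z
    simp only [hAdef, hDdef, Set.mem_inter_iff, Set.mem_setOf_eq, Set.mem_empty_iff_false,
      iff_false, not_and, and_imp]
    intro h1 _ h2
    simp only [hεdef] at h1 h2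
    linarith
  have hNn : star N * N = N * star N := by
    simpa [ContinuousLinearMap.star_eq_adjoint] using hN
  have key : spectrum ℂ (N + S) ⊆ A ∪ D := by
    intro z hz
    by_contra hout
    simp only [hAdef, hDdef, Set.mem_union, Set.mem_setOf_eq, not_or, not_and_or, not_lt] at hout
    obtain ⟨h1, h2⟩ := hout
    -- distance from z to the spectrum of N is at least ε
    have hdist : ∀ lam ∈ spectrum ℂ N, ε ≤ ‖z - lam‖ := by
      intro lam hlam
      have ht1 : ‖z‖ - ‖lam‖ ≤ ‖z - lam‖ := by
        simpa using norm_sub_norm_le z lam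
      have ht2 : ‖lam‖ - ‖z‖ ≤ ‖z - lam‖ := by
        have := norm_sub_norm_le lam z
        simpa [norm_sub_rev] using this
      rcases hspec hlam with h | h
      · simp only [Set.mem_setOf_eq] at h
        rcases h1 with h1 | h1
        · linarith
        · linarith
      · simp only [Set.mem_setOf_eq] at h
        linarith
    -- hence z is not in the spectrum of N
    have hzN : z ∉ spectrum ℂ N := by
      intro h
      have := hdist z h
      simp at this
      linarith
    obtain ⟨u, hu⟩ := spectrum.notMem_iff.mp hzN
    -- the resolvent (z - N)⁻¹ is normal
    have hcomm : star (↑u : H →L[ℂ] H) * ↑u = ↑u * star (↑u : H →L[ℂ] H) := by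
      rw [hu, star_sub, ← algebraMap_star_comm]
      simp only [mul_sub, sub_mul, hNn]
      rw [← Algebra.commutes z (star N), ← Algebra.commutes (star z) N,
        ← map_mul, ← map_mul, mul_comm (star z) z]
      abel
    have hbnormal : star (↑u⁻¹ : H →L[ℂ] H) * ↑u⁻¹ =
        (↑u⁻¹ : H →L[ℂ] H) * star (↑u⁻¹ : H →L[ℂ] H) := by
      have h1 : (↑u⁻¹ : H →L[ℂ] H) = Ring.inverse (↑u : H →L[ℂ] H) := (Ring.inverse_unit u).symm
      have hc : Commute (↑u : H →L[ℂ] H) (star ↑u) := hcomm.symm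
      rw [h1, ← Ring.inverse_star, ← Ring.mul_inverse_rev' hc,
        ← Ring.mul_inverse_rev' hc.symm, hcomm]
    haveI : IsStarNormal (↑u⁻¹ : H →L[ℂ] H) := ⟨hbnormal⟩
    -- bound the norm of the resolvent by the spectral radius
    set εnn : NNReal := ⟨ε, hε0.le⟩ with hεnn
    have hrad : spectralRadius ℂ (↑u⁻¹ : H →L[ℂ] H) ≤ (εnn⁻¹ : NNReal) := by
      rw [spectralRadius]
      apply iSup₂_le
      intro μ hμ
      have hμ0 : μ ≠ 0 := spectrum.ne_zero_of_mem_of_unit hμ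
      have hμinv : (μ⁻¹ : ℂ) ∈ spectrum ℂ (↑u : H →L[ℂ] H) := by
        have := (spectrum.inv_mem_iff (r := (Units.mk0 μ hμ0)⁻¹) (a := u)).mpr (by simpa using hμ)
        simpa using this
      rw [hu, ← spectrum.singleton_sub_eq] at hμinv
      obtain ⟨x, hx, lam, hlam, hxl⟩ := Set.mem_sub.mp hμinv
      rw [Set.mem_singleton_iff] at hx
      subst hx
      have hge : ε ≤ ‖μ⁻¹‖ := hxl ▸ hdist lam hlam
      have hμle : ‖μ‖ ≤ ε⁻¹ := by
        rw [norm_inv] at hge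
        rw [← inv_inv ‖μ‖]
        exact inv_anti₀ hε0 hge
      rw [ENNReal.coe_le_coe]
      rw [← NNReal.coe_le_coe, coe_nnnorm, NNReal.coe_inv, hεnn]
      exact hμle
    have hbn : ‖(↑u⁻¹ : H →L[ℂ] H)‖ ≤ ε⁻¹ := by
      have := IsStarNormal.spectralRadius_eq_nnnorm (↑u⁻¹ : H →L[ℂ] H)
      rw [this, ENNReal.coe_le_coe] at hrad
      calc ‖(↑u⁻¹ : H →L[ℂ] H)‖ = (‖(↑u⁻¹ : H →L[ℂ] H)‖₊ : ℝ) := (coe_nnnorm _).symm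
        _ ≤ ((εnn⁻¹ : NNReal) : ℝ) := by exact_mod_cast hrad
        _ = ε⁻¹ := by rw [NNReal.coe_inv]; rfl
    -- so 1 - u⁻¹ S is a unit, hence z - (N + S) is a unit
    have hlt : ‖(↑u⁻¹ : H →L[ℂ] H) * S‖ < 1 := by
      calc ‖(↑u⁻¹ : H →L[ℂ] H) * S‖ ≤ ‖(↑u⁻¹ : H →L[ℂ] H)‖ * ‖S‖ := norm_mul_le _ _
        _ ≤ ε⁻¹ * ‖S‖ := by
            apply mul_le_mul_of_nonneg_right hbn (norm_nonneg _)
        _ < ε⁻¹ * ε := by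
            apply mul_lt_mul_of_pos_left _ (inv_pos.mpr hε0)
            simpa [hεdef] using hS
        _ = 1 := inv_mul_cancel₀ hε0.ne'
    have hunit : IsUnit (algebraMap ℂ (H →L[ℂ] H) z - (N + S)) := by
      refine ⟨u * Units.oneSub _ hlt, ?_⟩
      have : (↑(u * Units.oneSub ((↑u⁻¹ : H →L[ℂ] H) * S) hlt) : H →L[ℂ] H)
          = ↑u * (1 - (↑u⁻¹ : H →L[ℂ] H) * S) := rfl
      rw [this, mul_sub, mul_one, ← mul_assoc, u.mul_inv, one_mul, hu]
      abel
    exact (spectrum.notMem_iff.mpr hunit) hz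
  -- assemble the splitting
  refine ⟨spectrum ℂ (N + S) ∩ A, spectrum ℂ (N + S) ∩ D, ?_, ?_, ?_, ?_, hAD⟩
  · rw [← Set.inter_union_distrib_left, Set.inter_eq_self_of_subset_left key]
  · apply Set.eq_empty_of_subset_empty
    rw [← hAD]
    exact fun x hx => ⟨hx.1.2, hx.2.2⟩
  · exact Set.inter_subset_right
  · exact Set.inter_subset_right
end
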